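/- For a small category D and an object d of D, the comma category d ↓ p_i is isomorphic to Δ^{op}(D_{d/}), the opposite of the category of simplices of the coslice category D_{d/}. -/

import Mathlib

open CategoryTheory Limits
universe u

namespace SCat

variable (D : Type u) [SmallCategory D]

lemma monotone_functor_comp {P Q R : Type*} [Preorder P] [Preorder Q] [Preorder R]
    (f : P →o Q) (g : Q →o R) :
    (g.comp f).monotone.functor = f.monotone.functor ⋙ g.monotone.functor := by
  refine CategoryTheory.Functor.ext (fun _ => rfl) ?_
  intros
  apply Subsingleton.elim

lemma monotone_functor_id {P : Type*} [Preorder P] :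
    (OrderHom.id : P →o P).monotone.functor = 𝟭 P := by
  refine CategoryTheory.Functor.ext (fun _ => rfl) ?_
  intros
  apply Subsingleton.elim

/-- The (opposite) category of simplices `Δᵒᵖ D` of a small category `D`: objects
are paths (functors `[n] ⥤ D`). -/
structure SimplexOfCat where
  n : ℕ
  F : ComposableArrows D n

variable {D}

/-- A morphism `X ⟶ Y` in `Δᵒᵖ D` is a simplicial operator `[Y.n] → [X.n]`
commuting with the functors to `D`. -/
instance : Category (SimplexOfCat D) where
  Hom X Y := {α : Fin (Y.n + 1) →o Fin (X.n + 1) // Y.F = α.monotone.functor ⋙ X.F}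
  id X := ⟨OrderHom.id, by rw [monotone_functor_id]; rfl⟩
  comp {X Y Z} f g := ⟨f.1.comp g.1, by
    rw [monotone_functor_comp, Functor.assoc, ← f.2, ← g.2]⟩
  id_comp f := Subtype.ext (OrderHom.ext _ _ rfl)
  comp_id f := Subtype.ext (OrderHom.ext _ _ rfl)
  assoc f g h := Subtype.ext (OrderHom.ext _ _ rfl)

variable (D)

/-- The initial-vertex functor `p_i : Δᵒᵖ D ⥤ D`, sending a path to its first vertex. -/
def pInit : SimplexOfCat D ⥤ D where
  obj X := X.F.obj 0
  map {X Y} f :=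
    X.F.map (homOfLE (Fin.zero_le _) : (0 : Fin (X.n + 1)) ⟶ f.1 0) ≫
      eqToHom (congrArg (fun G => G.obj (0 : Fin (Y.n + 1))) f.2).symm
  map_id X := by
    change X.F.map (𝟙 _) ≫ eqToHom rfl = 𝟙 _
    simp
  map_comp {X Y Z} f g := by
    have h := Functor.congr_hom f.2
      (homOfLE (Fin.zero_le (g.1 0)) : (0 : Fin (Y.n + 1)) ⟶ g.1 0)
    rw [h]
    simp only [Category.assoc]
    erw [eqToHom_trans_assoc, eqToHom_refl, Category.id_comp, eqToHom_trans,
      ← Functor.map_comp_assoc]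
    rfl

end SCat

open SCat

namespace Stmt1Aux

open CategoryTheory

variable {D : Type u} [SmallCategory D] {d : D}

lemma sa_obj_ext {C₀ : Type*} [Category C₀] {T : Type*} [Category T] {e : T} {F : C₀ ⥤ T}
    {x y : StructuredArrow e F} (h : x.right = y.right)
    (hh : x.hom ≫ eqToHom (congrArg F.obj h) = y.hom) : x = y := by
  obtain ⟨⟨⟨⟩⟩, xr, xh⟩ := x
  obtain ⟨⟨⟨⟩⟩, yr, yh⟩ := y
  change xr = yr at h
  subst h
  simp only [eqToHom_refl, Category.comp_id] at hh
  change xh = yh at hh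
  subst hh
  rfl

lemma under_obj_ext {x y : Under d} (h : x.right = y.right)
    (hh : x.hom ≫ eqToHom h = y.hom) : x = y := by
  obtain ⟨⟨⟨⟩⟩, xr, xh⟩ := x
  obtain ⟨⟨⟨⟩⟩, yr, yh⟩ := y
  change xr = yr at h
  subst h
  simp only [eqToHom_refl, Category.comp_id] at hh
  change xh = yh at hh
  subst hh
  rfl

lemma under_hom_eq {x y : Under d} (h : x = y) :
    x.hom ≫ eqToHom (congrArg Comma.right h) = y.hom := by
  subst h; simp

lemma sa_hom_heq {C₀ : Type*} [Category C₀] {T : Type*} [Category T] {e : T} {F : C₀ ⥤ T}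
    {x y x' y' : StructuredArrow e F} (hx : x = x') (hy : y = y')
    {f : x ⟶ y} {g : x' ⟶ y'} (h : HEq f.right g.right) : HEq f g := by
  subst hx; subst hy
  exact heq_of_eq (StructuredArrow.hom_ext _ _ (eq_of_heq h))

lemma under_hom_heq {x y x' y' : Under d} (hx : x = x') (hy : y = y')
    {f : x ⟶ y} {g : x' ⟶ y'} (h : HEq f.right g.right) : HEq f g := by
  subst hx; subst hy
  exact heq_of_eq (Under.UnderMorphism.ext (eq_of_heq h))

lemma simplex_hom_heq {E : Type*} [SmallCategory E] {X Y X' Y' : SimplexOfCat E}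
    (hX : X = X') (hY : Y = Y') {f : X ⟶ Y} {g : X' ⟶ Y'} (h : HEq f.1 g.1) : HEq f g := by
  subst hX; subst hY
  exact heq_of_eq (Subtype.ext (eq_of_heq h))

/-- Lift a simplex of `D` with a map from `d` to its first vertex to a simplex of `Under d`. -/
def liftF (X : SimplexOfCat D) (f : d ⟶ (pInit D).obj X) : ComposableArrows (Under d) X.n where
  obj i := Under.mk (f ≫ X.F.map (homOfLE i.zero_le))
  map {i j} h := Under.homMk (X.F.map h) (by
    dsimp
    erw [Category.assoc, ← X.F.map_comp]
    rfl)
  map_id i := by apply Under.UnderMorphism.ext; simp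
  map_comp := by intros; apply Under.UnderMorphism.ext; simp

lemma liftF_obj_eq {s t : StructuredArrow d (pInit D)} (g : s ⟶ t) (i : Fin (t.right.n + 1)) :
    (liftF t.right t.hom).obj i =
      (g.right.1.monotone.functor ⋙ liftF s.right s.hom).obj i := by
  refine under_obj_ext (Functor.congr_obj g.right.2 i) ?_
  dsimp [liftF]
  rw [← StructuredArrow.w g]
  dsimp [pInit]
  rw [Functor.congr_hom g.right.2 (homOfLE i.zero_le)]
  rw [show (homOfLE ((g.right.1 i).zero_le) :
        (0 : Fin (s.right.n + 1)) ⟶ g.right.1 i) =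
      homOfLE (Fin.zero_le _) ≫
        (g.right.1.monotone.functor.map (homOfLE i.zero_le)) from Subsingleton.elim _ _]
  simp
  erw [eqToHom_trans_assoc, eqToHom_refl, Category.id_comp, eqToHom_trans, eqToHom_refl, Category.comp_id, ← Functor.map_comp]

/-- Forward direction. -/
def toSimplex : StructuredArrow d (pInit D) ⥤ SimplexOfCat (Under d) where
  obj s := ⟨s.right.n, liftF s.right s.hom⟩
  map {s t} g := ⟨g.right.1, by
    refine CategoryTheory.Functor.ext (liftF_obj_eq g) (fun i j h => ?_)
    refine (conj_eqToHom_iff_heq _ _ (liftF_obj_eq g i) (liftF_obj_eq g j)).mpr ?_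
    exact under_hom_heq (liftF_obj_eq g i) (liftF_obj_eq g j)
      ((conj_eqToHom_iff_heq _ _ (Functor.congr_obj g.right.2 i)
        (Functor.congr_obj g.right.2 j)).mp (Functor.congr_hom g.right.2 h))⟩
  map_id s := by apply Subtype.ext; rfl
  map_comp g g' := by apply Subtype.ext; rfl

/-- Backward direction. -/
def ofSimplex : SimplexOfCat (Under d) ⥤ StructuredArrow d (pInit D) where
  obj G := StructuredArrow.mk (Y := (⟨G.n, G.F ⋙ Under.forget d⟩ : SimplexOfCat D)) (G.F.obj 0).hom
  map {G H} α := StructuredArrow.homMk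
    ⟨α.1, congrArg (· ⋙ Under.forget d) α.2⟩
    (by
      dsimp [pInit]
      rw [← Category.assoc]
      erw [Under.w (G.F.map (homOfLE (Fin.zero_le (α.1 0))))]
      exact under_hom_eq (Functor.congr_obj α.2 0).symm)
  map_id G := by apply StructuredArrow.hom_ext; exact Subtype.ext rfl
  map_comp α β := by apply StructuredArrow.hom_ext; exact Subtype.ext rfl

lemma obj_eq1 (s : StructuredArrow d (pInit D)) :
    (toSimplex ⋙ ofSimplex).obj s = s := by
  refine sa_obj_ext (rfl) ?_
  show (s.hom ≫ s.right.F.map (𝟙 0)) ≫ eqToHom _ = s.hom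
  simp
  erw [Category.comp_id]
  exact Category.comp_id s.hom

lemma eq1 : (toSimplex ⋙ ofSimplex : StructuredArrow d (pInit D) ⥤ _) = 𝟭 _ := by
  refine CategoryTheory.Functor.ext obj_eq1 (fun s t g => ?_)
  refine (conj_eqToHom_iff_heq _ _ (obj_eq1 s) (obj_eq1 t)).mpr ?_
  refine sa_hom_heq (obj_eq1 s) (obj_eq1 t) ?_
  exact simplex_hom_heq (congrArg Comma.right (obj_eq1 s))
    (congrArg Comma.right (obj_eq1 t)) HEq.rfl

lemma obj_eq2 (G : SimplexOfCat (Under d)) :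
    (ofSimplex ⋙ toSimplex).obj G = G := by
  obtain ⟨n, F⟩ := G
  have hobj : ∀ i, (liftF (ofSimplex.obj ⟨n, F⟩).right (ofSimplex.obj ⟨n, F⟩).hom).obj i
      = F.obj i := fun i => under_obj_ext rfl (by
    dsimp [toSimplex, ofSimplex, liftF]
    erw [eqToHom_refl, Category.comp_id]
    exact Under.w (F.map (homOfLE i.zero_le)))
  refine congrArg (SimplexOfCat.mk n) ?_
  refine CategoryTheory.Functor.ext hobj (fun i j h => ?_)
  refine (conj_eqToHom_iff_heq _ _ (hobj i) (hobj j)).mpr ?_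
  exact under_hom_heq (hobj i) (hobj j) HEq.rfl

lemma eq2 : (ofSimplex ⋙ toSimplex : SimplexOfCat (Under d) ⥤ _) = 𝟭 _ := by
  refine CategoryTheory.Functor.ext obj_eq2 (fun G H α => ?_)
  refine (conj_eqToHom_iff_heq _ _ (obj_eq2 G) (obj_eq2 H)).mpr ?_
  exact simplex_hom_heq (obj_eq2 G) (obj_eq2 H) HEq.rfl

end Stmt1Aux


open SCat in
/-- For a small category `D` and `d : D`, the comma category
`d ↓ p_i` is isomorphic (in `Cat`) to `Δᵒᵖ(D_{d/})`, the (opposite) category of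
simplices of the coslice category under `d`. -/
theorem stmt1 (D : Type u) [SmallCategory D] (d : D) :
    Nonempty ((Cat.of (StructuredArrow d (pInit D))) ≅ Cat.of (SimplexOfCat (Under d))) := by
  exact ⟨⟨Stmt1Aux.toSimplex.toCatHom, Stmt1Aux.ofSimplex.toCatHom, Cat.ext Stmt1Aux.eq1, Cat.ext Stmt1Aux.eq2⟩⟩
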